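/- Under the weighted vertex-colouring model, for all 1 ≤ i ≤ d and all i' ≠ i: (a) E[W̃_i] = n π_i² m̃^{(i)}; (b) Var(W̃_i) = n π_i² ( ṽ^{(i)} + (m̃^{(i)})² ( 1 − π_i² + D̃ π_i (1 − π_i) ) ); (c) Cov(W̃_i, W̃_{i'}) = − n π_i² π_{i'}² m̃^{(i)} m̃^{(i')} (1 + D̃). -/

import Mathlib

open MeasureTheory ProbabilityTheory Finset
open scoped Classical

lemma indep_prod_key {Ω ι : Type*} [MeasurableSpace Ω] {P : Measure Ω}
    [IsProbabilityMeasure P] {f : ι → Ω → ℝ}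
    (hind : iIndepFun f P)
    (hmeas : ∀ j, Measurable (f j)) (s : Finset ι)
    (hint : ∀ j ∈ s, Integrable (f j) P) :
    Integrable (fun ω => ∏ j ∈ s, f j ω) P ∧
      (∫ ω, ∏ j ∈ s, f j ω ∂P) = ∏ j ∈ s, ∫ ω, f j ω ∂P := by
  classical
  induction s using Finset.induction_on with
  | empty => simp
  | insert _ _ ha ih =>
    rename_i a s
    have hdep : IndepFun (f a) (fun ω => ∏ j ∈ s, f j ω) P := by
      have := (hind.indepFun_finsetProd_of_notMem hmeas ha).symm
      simpa [Finset.prod_fn] using this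
    obtain ⟨ih1, ih2⟩ := ih (fun j hj => hint j (Finset.mem_insert_of_mem hj))
    have hia := hint a (Finset.mem_insert_self a s)
    have hprod : Integrable (fun ω => f a ω * ∏ j ∈ s, f j ω) P := by
      have := hdep.integrable_mul hia ih1
      simpa [Pi.mul_def] using this
    constructor
    · simpa [Finset.prod_insert ha] using hprod
    · have hmul := hdep.integral_mul_eq_mul_integral hia.aestronglyMeasurable ih1.aestronglyMeasurable
      simp only [Pi.mul_def] at hmul
      rw [show (fun ω => ∏ j ∈ insert a s, f j ω) = fun ω => f a ω * ∏ j ∈ s, f j ω by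
        funext ω; rw [Finset.prod_insert ha], Finset.prod_insert ha, hmul, ih2]

set_option maxHeartbeats 3200000 in
/-- mean, variance and covariance of the weighted monochrome edge counts in a
randomly vertex-coloured graph with independent integer edge weights. -/
theorem weighted_monochrome_edge_moments {V : Type*} [Fintype V] [DecidableEq V]
    (G : SimpleGraph V) [DecidableRel G.Adj]
    (n : ℕ) (hn : n = G.edgeFinset.card) (hn1 : 1 ≤ n)
    (d : ℕ) (π : Fin d → ℝ) (hπ0 : ∀ i, 0 ≤ π i) (hπ1 : ∑ i, π i = 1)
    {Ω : Type*} [MeasurableSpace Ω] (P : Measure Ω) [IsProbabilityMeasure P]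
    (Y : V → Ω → Fin d) (hYmeas : ∀ v, Measurable (Y v))
    (hYdist : ∀ v i, (P {ω | Y v ω = i}).toReal = π i)
    -- the integer-valued edge weights
    (T : {e // e ∈ G.edgeFinset} → Fin d → Ω → ℤ)
    (hTmeas : ∀ e c, Measurable (T e c))
    -- joint independence of all the colours and all the weights
    (hindep : iIndepFun
      (Sum.elim (fun v : V => fun ω => ((Y v ω : ℕ) : ℤ))
        (fun p : {e // e ∈ G.edgeFinset} × Fin d => T p.1 p.2)) P)
    -- the law of `T e c` depends only on `c`
    (hTdist : ∀ e e' c, Measure.map (T e c) P = Measure.map (T e' c) P)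
    -- finite second moments
    (hT2 : ∀ e c, Integrable (fun ω => ((T e c ω : ℝ)) ^ 2) P)
    (mt vt : Fin d → ℝ)
    (hmt : ∀ e c, ∫ ω, (T e c ω : ℝ) ∂P = mt c)
    (hvt : ∀ e c, ∫ ω, ((T e c ω : ℝ) - mt c) ^ 2 ∂P = vt c)
    (Wt : Fin d → Ω → ℝ)
    (hWt : ∀ c ω, Wt c ω
      = ∑ e ∈ G.edgeFinset.attach,
          (if ∀ v ∈ e.1, Y v ω = c then (1:ℝ) else 0) * (T e c ω : ℝ))
    (De : Sym2 V → ℕ)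
    (hDe : ∀ e, De e
      = (G.edgeFinset.filter (fun f => f ≠ e ∧ ∃ v, v ∈ f ∧ v ∈ e)).card)
    (Dt : ℝ) (hDt : Dt = (n : ℝ)⁻¹ * ∑ e ∈ G.edgeFinset, (De e : ℝ))
    (i i' : Fin d) (hii' : i' ≠ i) :
    (∫ ω, Wt i ω ∂P) = n * (π i) ^ 2 * mt i ∧
    (∫ ω, (Wt i ω - n * (π i) ^ 2 * mt i) ^ 2 ∂P)
      = n * (π i) ^ 2 * (vt i + (mt i) ^ 2 * (1 - (π i) ^ 2 + Dt * π i * (1 - π i))) ∧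
    (∫ ω, (Wt i ω - n * (π i) ^ 2 * mt i) * (Wt i' ω - n * (π i') ^ 2 * mt i') ∂P)
      = -(n : ℝ) * (π i) ^ 2 * (π i') ^ 2 * mt i * mt i' * (1 + Dt) := by
  classical
  let Z : (V ⊕ ({e // e ∈ G.edgeFinset} × Fin d)) → Ω → ℤ :=
    Sum.elim (fun v : V => fun ω => ((Y v ω : ℕ) : ℤ))
      (fun p : {e // e ∈ G.edgeFinset} × Fin d => T p.1 p.2)
  have hZmeas : ∀ j, Measurable (Z j) := by
    rintro (v | p)
    · exact (measurable_from_top : Measurable fun k : Fin d => ((k : ℕ) : ℤ)).comp (hYmeas v)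
    · exact hTmeas p.1 p.2
  have key : ∀ (φ : (V ⊕ ({e // e ∈ G.edgeFinset} × Fin d)) → ℤ → ℝ)
      (s : Finset (V ⊕ ({e // e ∈ G.edgeFinset} × Fin d))),
      (∀ j ∈ s, Integrable (fun ω => φ j (Z j ω)) P) →
      Integrable (fun ω => ∏ j ∈ s, φ j (Z j ω)) P ∧
        (∫ ω, ∏ j ∈ s, φ j (Z j ω) ∂P) = ∏ j ∈ s, ∫ ω, φ j (Z j ω) ∂P := by
    intro φ s hint
    exact indep_prod_key (f := fun j ω => φ j (Z j ω))
      (hindep.comp φ (fun j => measurable_from_top))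
      (fun j => measurable_from_top.comp (hZmeas j)) s hint
  -- colour indicators
  let χ : V → Fin d → Ω → ℝ := fun a c ω => if Y a ω = c then 1 else 0
  have hχ : ∀ a c ω, χ a c ω = if Y a ω = c then 1 else 0 := fun _ _ _ => rfl
  have hIχ : ∀ a c, Integrable (fun ω => χ a c ω) P := by
    intro a c
    have hms : MeasurableSet {ω | Y a ω = c} := hYmeas a (measurableSet_singleton c)
    have h1 : (fun ω => χ a c ω) = Set.indicator {ω | Y a ω = c} (fun _ => (1:ℝ)) := by
      funext ω; simp [hχ, Set.indicator_apply]
    rw [h1]; exact (integrable_const 1).indicator hms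
  have hEχ : ∀ a c, (∫ ω, χ a c ω ∂P) = π c := by
    intro a c
    have hms : MeasurableSet {ω | Y a ω = c} := hYmeas a (measurableSet_singleton c)
    have h1 : (fun ω => χ a c ω) = Set.indicator {ω | Y a ω = c} (fun _ => (1:ℝ)) := by
      funext ω; simp [hχ, Set.indicator_apply]
    rw [h1, integral_indicator_const (1:ℝ) hms, measureReal_def, hYdist a c, smul_eq_mul, mul_one]
  have hcondeq : ∀ (a : V) (c : Fin d) (ω : Ω),
      (if ((Y a ω : ℕ) : ℤ) = ((c : ℕ) : ℤ) then (1:ℝ) else 0) = χ a c ω := by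
    intro a c ω; simp [hχ, Nat.cast_inj, Fin.val_inj]
  have hIτ : ∀ (e : {x // x ∈ G.edgeFinset}) (c : Fin d),
      Integrable (fun ω => ((T e c ω : ℝ))) P := by
    intro e c
    refine Integrable.mono' (((integrable_const (1:ℝ)).add (hT2 e c)).div_const 2)
      ((measurable_from_top.comp (hTmeas e c)).aestronglyMeasurable) ?_
    filter_upwards with ω
    have : |(T e c ω : ℝ)| ≤ (1 + (T e c ω : ℝ)^2)/2 := by nlinarith [abs_nonneg (T e c ω : ℝ), sq_abs (T e c ω : ℝ), sq_nonneg (|(T e c ω : ℝ)| - 1)]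
    simpa using this
  have hEτ2 : ∀ (e : {x // x ∈ G.edgeFinset}) (c : Fin d),
      (∫ ω, ((T e c ω : ℝ))^2 ∂P) = vt c + mt c ^ 2 := by
    intro e c
    have h0 := hvt e c
    have hexp : (fun ω => ((T e c ω : ℝ) - mt c)^2)
        = fun ω => ((T e c ω : ℝ))^2 - (2 * mt c) * (T e c ω : ℝ) + (mt c)^2 := by
      funext ω; ring
    rw [hexp] at h0
    have h1 : Integrable (fun ω => (T e c ω : ℝ)^2 - (2 * mt c) * (T e c ω : ℝ)) P :=
      (hT2 e c).sub ((hIτ e c).const_mul _)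
    rw [integral_add h1 (integrable_const _),
      integral_sub (hT2 e c) ((hIτ e c).const_mul _), integral_const_mul, hmt e c,
      integral_const] at h0
    simp only [measure_univ, ENNReal.toReal_one, probReal_univ, smul_eq_mul, one_mul] at h0
    nlinarith [h0]
  have edecomp : ∀ z ∈ G.edgeFinset, ∃ u v : V, u ≠ v ∧ z = s(u, v) := by
    intro z
    induction z using Sym2.ind with
    | _ u v =>
      intro hz
      rw [SimpleGraph.mem_edgeFinset, SimpleGraph.mem_edgeSet] at hz
      exact ⟨u, v, hz.ne, rfl⟩
  have hAsplit : ∀ (u v : V) (c : Fin d) (ω : Ω),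
      (if ∀ w ∈ s(u, v), Y w ω = c then (1:ℝ) else 0) = χ u c ω * χ v c ω := by
    intro u v c ω
    by_cases h1 : Y u ω = c <;> by_cases h2 : Y v ω = c <;>
      simp [hχ, Sym2.mem_iff, h1, h2]
  have hZl : ∀ (a : V) (ω : Ω), Z (Sum.inl a) ω = ((Y a ω : ℕ) : ℤ) := fun _ _ => rfl
  have hZr : ∀ (p : {e // e ∈ G.edgeFinset} × Fin d) (ω : Ω),
      Z (Sum.inr p) ω = T p.1 p.2 ω := fun _ _ => rfl
  have hX : ∀ (e : {x // x ∈ G.edgeFinset}) (c : Fin d),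
      Integrable (fun ω => (if ∀ v ∈ e.1, Y v ω = c then (1:ℝ) else 0) * (T e c ω : ℝ)) P ∧
      (∫ ω, (if ∀ v ∈ e.1, Y v ω = c then (1:ℝ) else 0) * (T e c ω : ℝ) ∂P)
        = π c ^ 2 * mt c := by
    intro e c
    obtain ⟨u, v, huv, he⟩ := edecomp e.1 e.2
    set φ : (V ⊕ ({e // e ∈ G.edgeFinset} × Fin d)) → ℤ → ℝ :=
      Sum.elim (fun _ z => if z = ((c:ℕ):ℤ) then (1:ℝ) else 0) (fun _ z => (z:ℝ)) with hφ
    have hφl : ∀ (a : V) (z : ℤ), φ (Sum.inl a) z = if z = ((c:ℕ):ℤ) then (1:ℝ) else 0 :=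
      fun _ _ => rfl
    have hφr : ∀ (p : {e // e ∈ G.edgeFinset} × Fin d) (z : ℤ), φ (Sum.inr p) z = (z:ℝ) :=
      fun _ _ => rfl
    have hmem1 : (Sum.inl u : V ⊕ ({e // e ∈ G.edgeFinset} × Fin d))
        ∉ ({Sum.inl v, Sum.inr (e,c)} : Finset _) := by simp [huv]
    have hmem2 : (Sum.inl v : V ⊕ ({e // e ∈ G.edgeFinset} × Fin d))
        ∉ ({Sum.inr (e,c)} : Finset _) := by simp
    have hint : ∀ j ∈ ({Sum.inl u, Sum.inl v, Sum.inr (e,c)} :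
        Finset (V ⊕ ({e // e ∈ G.edgeFinset} × Fin d))),
        Integrable (fun ω => φ j (Z j ω)) P := by
      intro j hj
      simp only [Finset.mem_insert, Finset.mem_singleton] at hj
      rcases hj with rfl | rfl | rfl
      · exact (hIχ u c).congr (by filter_upwards with ω; exact (hcondeq u c ω).symm)
      · exact (hIχ v c).congr (by filter_upwards with ω; exact (hcondeq v c ω).symm)
      · exact hIτ e c
    obtain ⟨hintg, hval⟩ := key φ _ hint
    have hFeq : (fun ω => (if ∀ w ∈ e.1, Y w ω = c then (1:ℝ) else 0) * (T e c ω : ℝ))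
        = fun ω => ∏ j ∈ ({Sum.inl u, Sum.inl v, Sum.inr (e,c)} :
            Finset (V ⊕ ({e // e ∈ G.edgeFinset} × Fin d))), φ j (Z j ω) := by
      funext ω
      rw [Finset.prod_insert hmem1, Finset.prod_insert hmem2, Finset.prod_singleton,
        hφl, hφl, hφr, hZl, hZl, hZr, hcondeq u c ω, hcondeq v c ω, he, hAsplit u v c ω,
        mul_assoc]
    constructor
    · rw [hFeq]; exact hintg
    · rw [hFeq, hval, Finset.prod_insert hmem1, Finset.prod_insert hmem2,
        Finset.prod_singleton]
      have h1 : (∫ ω, φ (Sum.inl u) (Z (Sum.inl u) ω) ∂P) = π c := by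
        rw [show (fun ω => φ (Sum.inl u) (Z (Sum.inl u) ω)) = fun ω => χ u c ω from
          funext fun ω => hcondeq u c ω]
        exact hEχ u c
      have h2 : (∫ ω, φ (Sum.inl v) (Z (Sum.inl v) ω) ∂P) = π c := by
        rw [show (fun ω => φ (Sum.inl v) (Z (Sum.inl v) ω)) = fun ω => χ v c ω from
          funext fun ω => hcondeq v c ω]
        exact hEχ v c
      have h3 : (∫ ω, φ (Sum.inr (e,c)) (Z (Sum.inr (e,c)) ω) ∂P) = mt c := hmt e c
      rw [h1, h2, h3]; ring
  have hzero : ∀ (e f : {x // x ∈ G.edgeFinset}) (c c' : Fin d), c ≠ c' →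
      (∃ u, u ∈ e.1 ∧ u ∈ f.1) →
      (fun ω => ((if ∀ v ∈ e.1, Y v ω = c then (1:ℝ) else 0) * (T e c ω : ℝ)) *
        ((if ∀ v ∈ f.1, Y v ω = c' then (1:ℝ) else 0) * (T f c' ω : ℝ)))
        = fun _ => (0:ℝ) := by
    rintro e f c c' hcc ⟨u, hue, huf⟩
    funext ω
    rcases em (∀ v ∈ e.1, Y v ω = c) with hA | hA
    · rcases em (∀ v ∈ f.1, Y v ω = c') with hB | hB
      · exact absurd ((hA u hue).symm.trans (hB u huf)) hcc
      · simp [if_neg hB]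
    · simp [if_neg hA]
  have hpair : ∀ (e f : {x // x ∈ G.edgeFinset}) (c c' : Fin d),
      Integrable (fun ω => ((if ∀ v ∈ e.1, Y v ω = c then (1:ℝ) else 0) * (T e c ω : ℝ)) *
          ((if ∀ v ∈ f.1, Y v ω = c' then (1:ℝ) else 0) * (T f c' ω : ℝ))) P ∧
      (∫ ω, ((if ∀ v ∈ e.1, Y v ω = c then (1:ℝ) else 0) * (T e c ω : ℝ)) *
          ((if ∀ v ∈ f.1, Y v ω = c' then (1:ℝ) else 0) * (T f c' ω : ℝ)) ∂P)
        = if e = f then (if c = c' then π c ^ 2 * (vt c + mt c ^ 2) else 0)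
          else if (∃ v, v ∈ f.1 ∧ v ∈ e.1) then (if c = c' then π c ^ 3 * mt c ^ 2 else 0)
          else π c ^ 2 * π c' ^ 2 * mt c * mt c' := by
    intro e f c c'
    by_cases hef : e = f
    · subst hef
      by_cases hcc : c = c'
      · subst hcc
        rw [if_pos rfl, if_pos rfl]
        -- CASE A
        obtain ⟨u, v, huv, he⟩ := edecomp e.1 e.2
        set φ : (V ⊕ ({e // e ∈ G.edgeFinset} × Fin d)) → ℤ → ℝ :=
          Sum.elim (fun _ z => if z = ((c:ℕ):ℤ) then (1:ℝ) else 0) (fun _ z => (z:ℝ)^2)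
            with hφ
        have hφl : ∀ (a : V) (z : ℤ), φ (Sum.inl a) z = if z = ((c:ℕ):ℤ) then (1:ℝ) else 0 :=
          fun _ _ => rfl
        have hφr : ∀ (p : {e // e ∈ G.edgeFinset} × Fin d) (z : ℤ),
          φ (Sum.inr p) z = (z:ℝ)^2 := fun _ _ => rfl
        have hmem1 : (Sum.inl u : V ⊕ ({e // e ∈ G.edgeFinset} × Fin d))
            ∉ ({Sum.inl v, Sum.inr (e,c)} : Finset _) := by simp [huv]
        have hmem2 : (Sum.inl v : V ⊕ ({e // e ∈ G.edgeFinset} × Fin d))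
            ∉ ({Sum.inr (e,c)} : Finset _) := by simp
        have hint : ∀ j ∈ ({Sum.inl u, Sum.inl v, Sum.inr (e,c)} :
            Finset (V ⊕ ({e // e ∈ G.edgeFinset} × Fin d))),
            Integrable (fun ω => φ j (Z j ω)) P := by
          intro j hj
          simp only [Finset.mem_insert, Finset.mem_singleton] at hj
          rcases hj with rfl | rfl | rfl
          · exact (hIχ u c).congr (by filter_upwards with ω; exact (hcondeq u c ω).symm)
          · exact (hIχ v c).congr (by filter_upwards with ω; exact (hcondeq v c ω).symm)
          · exact hT2 e c
        obtain ⟨hintg, hval⟩ := key φ _ hint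
        have hFeq : (fun ω => ((if ∀ w ∈ e.1, Y w ω = c then (1:ℝ) else 0) * (T e c ω : ℝ))
              * ((if ∀ w ∈ e.1, Y w ω = c then (1:ℝ) else 0) * (T e c ω : ℝ)))
            = fun ω => ∏ j ∈ ({Sum.inl u, Sum.inl v, Sum.inr (e,c)} :
                Finset (V ⊕ ({e // e ∈ G.edgeFinset} × Fin d))), φ j (Z j ω) := by
          funext ω
          rw [Finset.prod_insert hmem1, Finset.prod_insert hmem2, Finset.prod_singleton,
            hφl, hφl, hφr, hZl, hZl, hZr, hcondeq u c ω, hcondeq v c ω, he,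
            hAsplit u v c ω]
          have hidu : χ u c ω * χ u c ω = χ u c ω := by
            by_cases h : Y u ω = c <;> simp [hχ, h]
          have hidv : χ v c ω * χ v c ω = χ v c ω := by
            by_cases h : Y v ω = c <;> simp [hχ, h]
          calc (χ u c ω * χ v c ω * (T e c ω:ℝ)) * (χ u c ω * χ v c ω * (T e c ω:ℝ))
              = (χ u c ω * χ u c ω) * ((χ v c ω * χ v c ω) * ((T e c ω:ℝ)*(T e c ω:ℝ)))
                := by ring
            _ = χ u c ω * (χ v c ω * (T e c ω:ℝ)^2) := by rw [hidu, hidv]; ring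
        constructor
        · rw [hFeq]; exact hintg
        · rw [hFeq, hval, Finset.prod_insert hmem1, Finset.prod_insert hmem2,
            Finset.prod_singleton]
          have h1 : (∫ ω, φ (Sum.inl u) (Z (Sum.inl u) ω) ∂P) = π c := by
            rw [show (fun ω => φ (Sum.inl u) (Z (Sum.inl u) ω)) = fun ω => χ u c ω from
              funext fun ω => hcondeq u c ω]
            exact hEχ u c
          have h2 : (∫ ω, φ (Sum.inl v) (Z (Sum.inl v) ω) ∂P) = π c := by
            rw [show (fun ω => φ (Sum.inl v) (Z (Sum.inl v) ω)) = fun ω => χ v c ω from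
              funext fun ω => hcondeq v c ω]
            exact hEχ v c
          have h3 : (∫ ω, φ (Sum.inr (e,c)) (Z (Sum.inr (e,c)) ω) ∂P) = vt c + mt c ^2 :=
            hEτ2 e c
          rw [h1, h2, h3]; ring
      · -- CASE B : e = f, c ≠ c'
        rw [if_pos rfl, if_neg hcc]
        obtain ⟨u, v, huv, he⟩ := edecomp e.1 e.2
        have hue : u ∈ e.1 := by rw [he]; exact Sym2.mem_mk_left u v
        rw [hzero e e c c' hcc ⟨u, hue, hue⟩]
        simp
    · rw [if_neg hef]
      by_cases hsh : (∃ v, v ∈ f.1 ∧ v ∈ e.1)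
      · rw [if_pos hsh]
        by_cases hcc : c = c'
        · subst hcc
          rw [if_pos rfl]
          obtain ⟨u, huf, hue⟩ := hsh
          have hediag : ¬ e.1.IsDiag :=
            G.not_isDiag_of_mem_edgeSet (SimpleGraph.mem_edgeFinset.1 e.2)
          have hfdiag : ¬ f.1.IsDiag :=
            G.not_isDiag_of_mem_edgeSet (SimpleGraph.mem_edgeFinset.1 f.2)
          set v := Sym2.Mem.other hue with hvdef
          set w := Sym2.Mem.other huf with hwdef
          have he : s(u, v) = e.1 := Sym2.other_spec hue
          have hf : s(u, w) = f.1 := Sym2.other_spec huf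
          have hvu : v ≠ u := Sym2.other_ne hediag hue
          have hwu : w ≠ u := Sym2.other_ne hfdiag huf
          have hvw : v ≠ w := by
            intro h
            exact hef (Subtype.ext (by rw [← he, ← hf, h]))
          set φ : (V ⊕ ({e // e ∈ G.edgeFinset} × Fin d)) → ℤ → ℝ :=
            Sum.elim (fun _ z => if z = ((c:ℕ):ℤ) then (1:ℝ) else 0) (fun _ z => (z:ℝ))
              with hφ
          have hφl : ∀ (a : V) (z : ℤ),
              φ (Sum.inl a) z = if z = ((c:ℕ):ℤ) then (1:ℝ) else 0 := fun _ _ => rfl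
          have hφr : ∀ (p : {e // e ∈ G.edgeFinset} × Fin d) (z : ℤ),
              φ (Sum.inr p) z = (z:ℝ) := fun _ _ => rfl
          have hm1 : (Sum.inl u : V ⊕ ({e // e ∈ G.edgeFinset} × Fin d))
              ∉ ({Sum.inl v, Sum.inl w, Sum.inr (e,c), Sum.inr (f,c)} : Finset _) := by
            simp [Ne.symm hvu, Ne.symm hwu]
          have hm2 : (Sum.inl v : V ⊕ ({e // e ∈ G.edgeFinset} × Fin d))
              ∉ ({Sum.inl w, Sum.inr (e,c), Sum.inr (f,c)} : Finset _) := by simp [hvw]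
          have hm3 : (Sum.inl w : V ⊕ ({e // e ∈ G.edgeFinset} × Fin d))
              ∉ ({Sum.inr (e,c), Sum.inr (f,c)} : Finset _) := by simp
          have hm4 : (Sum.inr (e,c) : V ⊕ ({e // e ∈ G.edgeFinset} × Fin d))
              ∉ ({Sum.inr (f,c)} : Finset _) := by simp [hef]
          have hint : ∀ j ∈ ({Sum.inl u, Sum.inl v, Sum.inl w, Sum.inr (e,c), Sum.inr (f,c)} :
              Finset (V ⊕ ({e // e ∈ G.edgeFinset} × Fin d))),
              Integrable (fun ω => φ j (Z j ω)) P := by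
            intro j hj
            simp only [Finset.mem_insert, Finset.mem_singleton] at hj
            rcases hj with rfl | rfl | rfl | rfl | rfl
            · exact (hIχ u c).congr (by filter_upwards with ω; exact (hcondeq u c ω).symm)
            · exact (hIχ v c).congr (by filter_upwards with ω; exact (hcondeq v c ω).symm)
            · exact (hIχ w c).congr (by filter_upwards with ω; exact (hcondeq w c ω).symm)
            · exact hIτ e c
            · exact hIτ f c
          obtain ⟨hintg, hval⟩ := key φ _ hint
          have hFeq : (fun ω => ((if ∀ y ∈ e.1, Y y ω = c then (1:ℝ) else 0) * (T e c ω : ℝ))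
                * ((if ∀ y ∈ f.1, Y y ω = c then (1:ℝ) else 0) * (T f c ω : ℝ)))
              = fun ω => ∏ j ∈ ({Sum.inl u, Sum.inl v, Sum.inl w, Sum.inr (e,c),
                  Sum.inr (f,c)} :
                  Finset (V ⊕ ({e // e ∈ G.edgeFinset} × Fin d))), φ j (Z j ω) := by
            funext ω
            rw [Finset.prod_insert hm1, Finset.prod_insert hm2, Finset.prod_insert hm3,
              Finset.prod_insert hm4, Finset.prod_singleton,
              hφl, hφl, hφl, hφr, hφr, hZl, hZl, hZl, hZr, hZr,
              hcondeq u c ω, hcondeq v c ω, hcondeq w c ω, ← he, ← hf,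
              hAsplit u v c ω, hAsplit u w c ω]
            have hidu : χ u c ω * χ u c ω = χ u c ω := by
              by_cases h : Y u ω = c <;> simp [hχ, h]
            calc (χ u c ω * χ v c ω * (T e c ω:ℝ)) * (χ u c ω * χ w c ω * (T f c ω:ℝ))
                = (χ u c ω * χ u c ω) * (χ v c ω * (χ w c ω * ((T e c ω:ℝ)*(T f c ω:ℝ))))
                  := by ring
              _ = χ u c ω * (χ v c ω * (χ w c ω * ((T e c ω:ℝ)*(T f c ω:ℝ)))) := by rw [hidu]
          constructor
          · rw [hFeq]; exact hintg
          · rw [hFeq, hval, Finset.prod_insert hm1, Finset.prod_insert hm2,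
              Finset.prod_insert hm3, Finset.prod_insert hm4, Finset.prod_singleton]
            have h1 : (∫ ω, φ (Sum.inl u) (Z (Sum.inl u) ω) ∂P) = π c := by
              rw [show (fun ω => φ (Sum.inl u) (Z (Sum.inl u) ω)) = fun ω => χ u c ω from
                funext fun ω => hcondeq u c ω]
              exact hEχ u c
            have h2 : (∫ ω, φ (Sum.inl v) (Z (Sum.inl v) ω) ∂P) = π c := by
              rw [show (fun ω => φ (Sum.inl v) (Z (Sum.inl v) ω)) = fun ω => χ v c ω from
                funext fun ω => hcondeq v c ω]
              exact hEχ v c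
            have h3 : (∫ ω, φ (Sum.inl w) (Z (Sum.inl w) ω) ∂P) = π c := by
              rw [show (fun ω => φ (Sum.inl w) (Z (Sum.inl w) ω)) = fun ω => χ w c ω from
                funext fun ω => hcondeq w c ω]
              exact hEχ w c
            have h4 : (∫ ω, φ (Sum.inr (e,c)) (Z (Sum.inr (e,c)) ω) ∂P) = mt c := hmt e c
            have h5 : (∫ ω, φ (Sum.inr (f,c)) (Z (Sum.inr (f,c)) ω) ∂P) = mt c := hmt f c
            rw [h1, h2, h3, h4, h5]; ring
        · rw [if_neg hcc]
          obtain ⟨u, huf, hue⟩ := hsh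
          rw [hzero e f c c' hcc ⟨u, hue, huf⟩]
          simp
      · rw [if_neg hsh]
        push_neg at hsh
        obtain ⟨u, v, huv, he⟩ := edecomp e.1 e.2
        obtain ⟨w, x, hwx, hf⟩ := edecomp f.1 f.2
        have hue : u ∈ e.1 := by rw [he]; exact Sym2.mem_mk_left u v
        have hve : v ∈ e.1 := by rw [he]; exact Sym2.mem_mk_right u v
        have hwf : w ∈ f.1 := by rw [hf]; exact Sym2.mem_mk_left w x
        have hxf : x ∈ f.1 := by rw [hf]; exact Sym2.mem_mk_right w x
        have huw : u ≠ w := fun h => hsh w hwf (h ▸ hue)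
        have hux : u ≠ x := fun h => hsh x hxf (h ▸ hue)
        have hvw : v ≠ w := fun h => hsh w hwf (h ▸ hve)
        have hvx : v ≠ x := fun h => hsh x hxf (h ▸ hve)
        set φ : (V ⊕ ({e // e ∈ G.edgeFinset} × Fin d)) → ℤ → ℝ :=
          Sum.elim (fun a z =>
              if z = (((if a = w ∨ a = x then c' else c) : Fin d) : ℕ) then (1:ℝ) else 0)
            (fun _ z => (z:ℝ)) with hφ
        have hφu : ∀ z : ℤ, φ (Sum.inl u) z = if z = ((c:ℕ):ℤ) then (1:ℝ) else 0 := by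
          intro z; rw [hφ]; simp [huw, hux]
        have hφv : ∀ z : ℤ, φ (Sum.inl v) z = if z = ((c:ℕ):ℤ) then (1:ℝ) else 0 := by
          intro z; rw [hφ]; simp [hvw, hvx]
        have hφw : ∀ z : ℤ, φ (Sum.inl w) z = if z = ((c':ℕ):ℤ) then (1:ℝ) else 0 := by
          intro z; rw [hφ]; simp
        have hφx : ∀ z : ℤ, φ (Sum.inl x) z = if z = ((c':ℕ):ℤ) then (1:ℝ) else 0 := by
          intro z; rw [hφ]; simp
        have hφr : ∀ (p : {e // e ∈ G.edgeFinset} × Fin d) (z : ℤ),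
            φ (Sum.inr p) z = (z:ℝ) := fun _ _ => rfl
        have hm1 : (Sum.inl u : V ⊕ ({e // e ∈ G.edgeFinset} × Fin d))
            ∉ ({Sum.inl v, Sum.inl w, Sum.inl x, Sum.inr (e,c), Sum.inr (f,c')} :
              Finset _) := by simp [huv, huw, hux]
        have hm2 : (Sum.inl v : V ⊕ ({e // e ∈ G.edgeFinset} × Fin d))
            ∉ ({Sum.inl w, Sum.inl x, Sum.inr (e,c), Sum.inr (f,c')} : Finset _) := by
          simp [hvw, hvx]
        have hm3 : (Sum.inl w : V ⊕ ({e // e ∈ G.edgeFinset} × Fin d))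
            ∉ ({Sum.inl x, Sum.inr (e,c), Sum.inr (f,c')} : Finset _) := by simp [hwx]
        have hm4 : (Sum.inl x : V ⊕ ({e // e ∈ G.edgeFinset} × Fin d))
            ∉ ({Sum.inr (e,c), Sum.inr (f,c')} : Finset _) := by simp
        have hm5 : (Sum.inr (e,c) : V ⊕ ({e // e ∈ G.edgeFinset} × Fin d))
            ∉ ({Sum.inr (f,c')} : Finset _) := by simp [hef]
        have hint : ∀ j ∈ ({Sum.inl u, Sum.inl v, Sum.inl w, Sum.inl x, Sum.inr (e,c),
            Sum.inr (f,c')} : Finset (V ⊕ ({e // e ∈ G.edgeFinset} × Fin d))),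
            Integrable (fun ω => φ j (Z j ω)) P := by
          intro j hj
          simp only [Finset.mem_insert, Finset.mem_singleton] at hj
          rcases hj with rfl | rfl | rfl | rfl | rfl | rfl
          · exact (hIχ u c).congr
              (by filter_upwards with ω; rw [hφu, hZl]; exact (hcondeq u c ω).symm)
          · exact (hIχ v c).congr
              (by filter_upwards with ω; rw [hφv, hZl]; exact (hcondeq v c ω).symm)
          · exact (hIχ w c').congr
              (by filter_upwards with ω; rw [hφw, hZl]; exact (hcondeq w c' ω).symm)
          · exact (hIχ x c').congr
              (by filter_upwards with ω; rw [hφx, hZl]; exact (hcondeq x c' ω).symm)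
          · exact hIτ e c
          · exact hIτ f c'
        obtain ⟨hintg, hval⟩ := key φ _ hint
        have hFeq : (fun ω => ((if ∀ y ∈ e.1, Y y ω = c then (1:ℝ) else 0) * (T e c ω : ℝ))
              * ((if ∀ y ∈ f.1, Y y ω = c' then (1:ℝ) else 0) * (T f c' ω : ℝ)))
            = fun ω => ∏ j ∈ ({Sum.inl u, Sum.inl v, Sum.inl w, Sum.inl x, Sum.inr (e,c),
                Sum.inr (f,c')} :
                Finset (V ⊕ ({e // e ∈ G.edgeFinset} × Fin d))), φ j (Z j ω) := by
          funext ω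
          rw [Finset.prod_insert hm1, Finset.prod_insert hm2, Finset.prod_insert hm3,
            Finset.prod_insert hm4, Finset.prod_insert hm5, Finset.prod_singleton,
            hφu, hφv, hφw, hφx, hφr, hφr, hZl, hZl, hZl, hZl, hZr, hZr,
            hcondeq u c ω, hcondeq v c ω, hcondeq w c' ω, hcondeq x c' ω, he, hf,
            hAsplit u v c ω, hAsplit w x c' ω]
          ring
        constructor
        · rw [hFeq]; exact hintg
        · rw [hFeq, hval, Finset.prod_insert hm1, Finset.prod_insert hm2,
            Finset.prod_insert hm3, Finset.prod_insert hm4, Finset.prod_insert hm5,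
            Finset.prod_singleton]
          have h1 : (∫ ω, φ (Sum.inl u) (Z (Sum.inl u) ω) ∂P) = π c := by
            rw [show (fun ω => φ (Sum.inl u) (Z (Sum.inl u) ω)) = fun ω => χ u c ω from
              funext fun ω => by rw [hφu, hZl]; exact hcondeq u c ω]
            exact hEχ u c
          have h2 : (∫ ω, φ (Sum.inl v) (Z (Sum.inl v) ω) ∂P) = π c := by
            rw [show (fun ω => φ (Sum.inl v) (Z (Sum.inl v) ω)) = fun ω => χ v c ω from
              funext fun ω => by rw [hφv, hZl]; exact hcondeq v c ω]
            exact hEχ v c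
          have h3 : (∫ ω, φ (Sum.inl w) (Z (Sum.inl w) ω) ∂P) = π c' := by
            rw [show (fun ω => φ (Sum.inl w) (Z (Sum.inl w) ω)) = fun ω => χ w c' ω from
              funext fun ω => by rw [hφw, hZl]; exact hcondeq w c' ω]
            exact hEχ w c'
          have h4 : (∫ ω, φ (Sum.inl x) (Z (Sum.inl x) ω) ∂P) = π c' := by
            rw [show (fun ω => φ (Sum.inl x) (Z (Sum.inl x) ω)) = fun ω => χ x c' ω from
              funext fun ω => by rw [hφx, hZl]; exact hcondeq x c' ω]
            exact hEχ x c'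
          have h5 : (∫ ω, φ (Sum.inr (e,c)) (Z (Sum.inr (e,c)) ω) ∂P) = mt c := hmt e c
          have h6 : (∫ ω, φ (Sum.inr (f,c')) (Z (Sum.inr (f,c')) ω) ∂P) = mt c' := hmt f c'
          rw [h1, h2, h3, h4, h5, h6]; ring
  -- mean of Wt
  have hEW : ∀ c : Fin d, (∫ ω, Wt c ω ∂P) = n * π c ^ 2 * mt c := by
    intro c
    simp only [hWt]
    rw [integral_finset_sum _ (fun e _ => (hX e c).1),
      Finset.sum_congr rfl (fun e _ => (hX e c).2), Finset.sum_const, Finset.card_attach,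
      ← hn, nsmul_eq_mul]
    ring
  have hIW : ∀ c : Fin d, Integrable (Wt c) P := by
    intro c
    exact (integrable_finset_sum _ (fun e (_ : e ∈ G.edgeFinset.attach) => (hX e c).1)).congr
      (by filter_upwards with ω; exact (hWt c ω).symm)
  have hIWW : ∀ c c' : Fin d, Integrable (fun ω => Wt c ω * Wt c' ω) P := by
    intro c c'
    refine Integrable.congr (integrable_finset_sum _ (fun e (_ : e ∈ G.edgeFinset.attach) =>
      integrable_finset_sum _ (fun f (_ : f ∈ G.edgeFinset.attach) => (hpair e f c c').1))) ?_
    filter_upwards with ω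
    rw [hWt c ω, hWt c' ω, Finset.sum_mul_sum]
  -- total count of overlapping pairs
  have hnne : (n : ℝ) ≠ 0 := Nat.cast_ne_zero.2 (by omega)
  have hS : ∑ E ∈ G.edgeFinset, (De E : ℝ) = n * Dt := by
    rw [hDt, ← mul_assoc, mul_inv_cancel₀ hnne, one_mul]
  have hEprod : ∀ (c c' : Fin d) (q1 q2 q3 : ℝ),
      (∀ e f : {x // x ∈ G.edgeFinset},
        (∫ ω, ((if ∀ v ∈ e.1, Y v ω = c then (1:ℝ) else 0) * (T e c ω : ℝ)) *
          ((if ∀ v ∈ f.1, Y v ω = c' then (1:ℝ) else 0) * (T f c' ω : ℝ)) ∂P)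
          = if e = f then q1 else if (∃ v, v ∈ f.1 ∧ v ∈ e.1) then q2 else q3) →
      (∫ ω, Wt c ω * Wt c' ω ∂P)
        = n * q1 + (n*Dt) * q2 + (n*((n:ℝ)-1) - n*Dt) * q3 := by
    intro c c' q1 q2 q3 hval
    rw [show (fun ω => Wt c ω * Wt c' ω) = fun ω => ∑ e ∈ G.edgeFinset.attach,
        ∑ f ∈ G.edgeFinset.attach,
        ((if ∀ v ∈ e.1, Y v ω = c then (1:ℝ) else 0) * (T e c ω : ℝ)) *
          ((if ∀ v ∈ f.1, Y v ω = c' then (1:ℝ) else 0) * (T f c' ω : ℝ)) from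
      funext fun ω => by rw [hWt c ω, hWt c' ω, Finset.sum_mul_sum]]
    rw [integral_finset_sum _ (fun e _ =>
      integrable_finset_sum _ (fun f _ => (hpair e f c c').1))]
    rw [Finset.sum_congr rfl (fun e _ =>
      integral_finset_sum _ (fun f _ => (hpair e f c c').1))]
    rw [Finset.sum_congr rfl (fun e _ => Finset.sum_congr rfl (fun f _ => hval e f))]
    -- now a pure counting problem
    have step1 : ∑ e ∈ G.edgeFinset.attach, ∑ f ∈ G.edgeFinset.attach,
        (if e = f then q1 else if (∃ v, v ∈ f.1 ∧ v ∈ e.1) then q2 else q3)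
        = ∑ e ∈ G.edgeFinset.attach, ∑ F ∈ G.edgeFinset,
            (if F = e.1 then q1 else if (∃ v, v ∈ F ∧ v ∈ e.1) then q2 else q3) := by
      refine Finset.sum_congr rfl fun e _ => ?_
      rw [← Finset.sum_attach G.edgeFinset
        (fun F => if F = e.1 then q1 else if (∃ v, v ∈ F ∧ v ∈ e.1) then q2 else q3)]
      refine Finset.sum_congr rfl fun f _ => ?_
      by_cases h : e = f
      · subst h; simp
      · have h1 : ¬ (f.1 = e.1) := fun hh => h (Subtype.ext hh.symm)
        simp only [if_neg h, if_neg h1]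
    rw [step1]
    have hinner : ∀ E, E ∈ G.edgeFinset →
        ∑ F ∈ G.edgeFinset, (if F = E then q1 else if (∃ v, v ∈ F ∧ v ∈ E) then q2 else q3)
        = q1 + (De E : ℝ) * q2 + ((n:ℝ) - 1 - (De E : ℝ)) * q3 := by
      intro E hE
      rw [← Finset.add_sum_erase _ _ hE, if_pos rfl,
        Finset.sum_congr rfl (fun F hF => if_neg (Finset.mem_erase.1 hF).1),
        Finset.sum_ite _ _, Finset.sum_const, Finset.sum_const]
      have hc1 : ((G.edgeFinset.erase E).filter (fun F => ∃ v, v ∈ F ∧ v ∈ E)).card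
          = De E := by
        rw [hDe E]
        congr 1
        rw [← Finset.filter_ne', Finset.filter_filter]
      have hc2 : ((G.edgeFinset.erase E).filter (fun F => ∃ v, v ∈ F ∧ v ∈ E)).card
            + ((G.edgeFinset.erase E).filter (fun F => ¬ ∃ v, v ∈ F ∧ v ∈ E)).card
          = (G.edgeFinset.erase E).card :=
        Finset.card_filter_add_card_filter_not _
      have hc3 : (G.edgeFinset.erase E).card = n - 1 := by
        rw [Finset.card_erase_of_mem hE, ← hn]
      have hc4 : (((G.edgeFinset.erase E).filter
          (fun F => ¬ ∃ v, v ∈ F ∧ v ∈ E)).card : ℝ) = (n:ℝ) - 1 - (De E : ℝ) := by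
        rw [hc1, hc3] at hc2
        have := congrArg (fun k : ℕ => (k : ℝ)) hc2
        push_cast [Nat.cast_sub hn1] at this
        linarith
      rw [hc1, nsmul_eq_mul, nsmul_eq_mul, hc4]
      ring
    rw [Finset.sum_attach G.edgeFinset (fun E => ∑ F ∈ G.edgeFinset,
      (if F = E then q1 else if (∃ v, v ∈ F ∧ v ∈ E) then q2 else q3))]
    rw [Finset.sum_congr rfl hinner]
    rw [Finset.sum_add_distrib, Finset.sum_add_distrib, Finset.sum_const, ← hn,
      ← Finset.sum_mul, ← Finset.sum_mul, Finset.sum_sub_distrib, Finset.sum_const, ← hn,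
      hS, nsmul_eq_mul, nsmul_eq_mul]
  -- the three statements
  refine ⟨hEW i, ?_, ?_⟩
  · -- variance
    have hval : ∀ e f : {x // x ∈ G.edgeFinset},
        (∫ ω, ((if ∀ v ∈ e.1, Y v ω = i then (1:ℝ) else 0) * (T e i ω : ℝ)) *
          ((if ∀ v ∈ f.1, Y v ω = i then (1:ℝ) else 0) * (T f i ω : ℝ)) ∂P)
          = if e = f then (π i ^ 2 * (vt i + mt i ^ 2))
            else if (∃ v, v ∈ f.1 ∧ v ∈ e.1) then (π i ^ 3 * mt i ^ 2)
            else π i ^ 2 * π i ^ 2 * mt i * mt i := by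
      intro e f
      have := (hpair e f i i).2
      simpa using this
    have hE2 := hEprod i i _ _ _ hval
    rw [show (fun ω => (Wt i ω - n * (π i) ^ 2 * mt i) ^ 2)
        = fun ω => (Wt i ω * Wt i ω - (2 * ((n:ℝ) * (π i)^2 * mt i)) * Wt i ω)
            + ((n:ℝ) * (π i)^2 * mt i)^2 from funext fun ω => by ring]
    have hint1 : Integrable (fun ω => Wt i ω * Wt i ω
        - (2 * ((n:ℝ) * (π i)^2 * mt i)) * Wt i ω) P :=
      (hIWW i i).sub ((hIW i).const_mul _)
    rw [integral_add hint1 (integrable_const _),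
      integral_sub (hIWW i i) ((hIW i).const_mul _), integral_const_mul, hEW i, hE2,
      integral_const]
    simp only [measure_univ, ENNReal.toReal_one, probReal_univ, smul_eq_mul, one_mul]
    ring
  · -- covariance
    have hval : ∀ e f : {x // x ∈ G.edgeFinset},
        (∫ ω, ((if ∀ v ∈ e.1, Y v ω = i then (1:ℝ) else 0) * (T e i ω : ℝ)) *
          ((if ∀ v ∈ f.1, Y v ω = i' then (1:ℝ) else 0) * (T f i' ω : ℝ)) ∂P)
          = if e = f then (0:ℝ)
            else if (∃ v, v ∈ f.1 ∧ v ∈ e.1) then (0:ℝ)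
            else π i ^ 2 * π i' ^ 2 * mt i * mt i' := by
      intro e f
      have := (hpair e f i i').2
      have hne : ¬ (i = i') := fun h => hii' h.symm
      simpa [hne] using this
    have hE2 := hEprod i i' _ _ _ hval
    rw [show (fun ω => (Wt i ω - n * (π i) ^ 2 * mt i)
          * (Wt i' ω - n * (π i') ^ 2 * mt i'))
        = fun ω => (Wt i ω * Wt i' ω
            - (((n:ℝ) * (π i')^2 * mt i') * Wt i ω
              + ((n:ℝ) * (π i)^2 * mt i) * Wt i' ω))
            + ((n:ℝ) * (π i)^2 * mt i) * ((n:ℝ) * (π i')^2 * mt i') from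
      funext fun ω => by ring]
    have hint1 : Integrable (fun ω => Wt i ω * Wt i' ω
        - (((n:ℝ) * (π i')^2 * mt i') * Wt i ω
          + ((n:ℝ) * (π i)^2 * mt i) * Wt i' ω)) P :=
      (hIWW i i').sub (((hIW i).const_mul _).add ((hIW i').const_mul _))
    have hint2 : Integrable (fun ω => ((n:ℝ) * (π i')^2 * mt i') * Wt i ω
        + ((n:ℝ) * (π i)^2 * mt i) * Wt i' ω) P :=
      ((hIW i).const_mul _).add ((hIW i').const_mul _)
    rw [integral_add hint1 (integrable_const _),
      integral_sub (hIWW i i') hint2,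
      integral_add ((hIW i).const_mul _) ((hIW i').const_mul _),
      integral_const_mul, integral_const_mul, hEW i, hEW i', hE2, integral_const]
    simp only [measure_univ, ENNReal.toReal_one, probReal_univ, smul_eq_mul, one_mul]
    ring
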